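/- Let V be a real vector space of dimension 2p and ω an alternating 2-form on V with trivial kernel, i.e. ω^{∧p} ≠ 0. Then for every integer k with 0 ≤ k ≤ p − 1, the linear map λ^k from alternating k-forms to alternating (k+2)-forms given by β ↦ ω ∧ β is injective. -/

import Mathlib

set_option synthInstance.maxHeartbeats 1000000
set_option maxHeartbeats 1000000

/-!
STATEMENT 5: If `V` is a real vector space of dimension `2p` and `ω` is an alternating
2-form with `ω^p ≠ 0`, then for every `k ≤ p - 1` (i.e. `k < p`) the map
`λ^k : β ↦ ω ∧ β` from `k`-forms to `(k+2)`-forms is injective.  Forms of degree `k` are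
modelled as elements of `⋀[ℝ]^k (V^*)`, with the wedge product given by multiplication in
the exterior algebra of the dual space.
-/
set_option linter.unusedSectionVars false
set_option linter.unreachableTactic false
set_option linter.unusedTactic false
set_option linter.unnecessarySimpa false
namespace Statement5Aux
open ExteriorAlgebra
variable {M : Type*} [AddCommGroup M] [Module ℝ M]

noncomputable def ct (d : Module.Dual ℝ M) : ExteriorAlgebra ℝ M →ₗ[ℝ] ExteriorAlgebra ℝ M :=
  CliffordAlgebra.contractLeft d

lemma ct_ι_mul (d : Module.Dual ℝ M) (m : M) (x : ExteriorAlgebra ℝ M) :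
    ct d (ι ℝ m * x) = d m • x - ι ℝ m * ct d x :=
  CliffordAlgebra.contractLeft_ι_mul _ _ _

lemma ct_ι (d : Module.Dual ℝ M) (m : M) : ct d (ι ℝ m) = algebraMap ℝ _ (d m) :=
  CliffordAlgebra.contractLeft_ι _ d m

lemma ι_anticomm (a b : M) : ι ℝ a * ι ℝ b = -(ι ℝ b * ι ℝ a) :=
  eq_neg_of_add_eq_zero_left (ι_add_mul_swap a b)

lemma mul_algebraMap_eq_smul (x : ExteriorAlgebra ℝ M) (r : ℝ) :
    x * algebraMap ℝ _ r = r • x := by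
  rw [← Algebra.commutes, ← Algebra.smul_def]

lemma ct_ι_mul_ι (d : Module.Dual ℝ M) (a b : M) :
    ct d (ι ℝ a * ι ℝ b) = d a • ι ℝ b - d b • ι ℝ a := by
  rw [ct_ι_mul, ct_ι, mul_algebraMap_eq_smul]

lemma ct_ct_ι_mul_ι (d d' : Module.Dual ℝ M) (a b : M) :
    ct d' (ct d (ι ℝ a * ι ℝ b)) = algebraMap ℝ _ (d a * d' b - d b * d' a) := by
  rw [ct_ι_mul_ι, map_sub, map_smul, map_smul, ct_ι, ct_ι, map_sub]
  rw [Algebra.smul_def, Algebra.smul_def, ← map_mul, ← map_mul]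

-- span of pair monomials
lemma mem_span_pairs {n : ℕ} (b : Module.Basis (Fin n) ℝ M) {x : ExteriorAlgebra ℝ M}
    (hx : x ∈ LinearMap.range (ι ℝ : M →ₗ[ℝ] ExteriorAlgebra ℝ M) ^ 2) :
    x ∈ Submodule.span ℝ (Set.range fun q : Fin n × Fin n => ι ℝ (b q.1) * ι ℝ (b q.2)) := by
  rw [pow_two] at hx
  refine Submodule.mul_induction_on hx (fun u hu v hv => ?_) (fun u v hu hv => add_mem hu hv)
  obtain ⟨a, rfl⟩ := hu
  obtain ⟨c, rfl⟩ := hv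
  have ha : (ι ℝ a : ExteriorAlgebra ℝ M) = ∑ i, b.repr a i • ι ℝ (b i) := by
    conv_lhs => rw [← b.sum_repr a]
    rw [map_sum]
    simp
  have hc : (ι ℝ c : ExteriorAlgebra ℝ M) = ∑ j, b.repr c j • ι ℝ (b j) := by
    conv_lhs => rw [← b.sum_repr c]
    rw [map_sum]
    simp
  rw [ha, hc, Finset.sum_mul_sum]
  refine Submodule.sum_mem _ fun i _ => Submodule.sum_mem _ fun j _ => ?_
  rw [smul_mul_smul_comm]   -- (r•x)*(s•y) = (r*s)•(x*y)?
  exact Submodule.smul_mem _ _ (Submodule.subset_span ⟨(i, j), rfl⟩)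

-- separation lemma
lemma eq_zero_of_ct_eq_zero [FiniteDimensional ℝ M] {x : ExteriorAlgebra ℝ M}
    (hx : x ∈ LinearMap.range (ι ℝ : M →ₗ[ℝ] ExteriorAlgebra ℝ M) ^ 2)
    (h : ∀ d : Module.Dual ℝ M, ct d x = 0) : x = 0 := by
  classical
  set n := Module.finrank ℝ M
  obtain ⟨b⟩ : Nonempty (Module.Basis (Fin n) ℝ M) := ⟨Module.finBasis ℝ M⟩
  have hs := mem_span_pairs b hx
  rw [Submodule.mem_span_range_iff_exists_fun ℝ] at hs
  obtain ⟨c, hc⟩ := hs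
  have ecoord : ∀ (k : Fin n) (m : Fin n), b.coord k (b m) = if m = k then 1 else 0 := by
    intro k m
    rw [Module.Basis.coord_apply, Module.Basis.repr_self, Finsupp.single_apply]
  have key : ∀ k l : Fin n, c (k, l) = c (l, k) := by
    intro k l
    have h2 : ct (b.coord l) (ct (b.coord k) x) = 0 := by rw [h (b.coord k), map_zero]
    rw [← hc, map_sum, map_sum] at h2
    have hterm : ∀ q : Fin n × Fin n,
        ct (b.coord l) (ct (b.coord k) (c q • (ι ℝ (b q.1) * ι ℝ (b q.2))))
          = algebraMap ℝ _ ((if q = (k, l) then c (k, l) else 0)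
              - (if q = (l, k) then c (l, k) else 0)) := by
      intro q
      rw [map_smul, map_smul, ct_ct_ι_mul_ι, Algebra.smul_def, ← map_mul]
      congr 1
      rw [ecoord, ecoord, ecoord, ecoord]
      rcases q with ⟨q1, q2⟩
      simp only [Prod.mk.injEq, Prod.ext_iff]
      by_cases h1 : q1 = k <;> by_cases h2 : q2 = l <;> by_cases h3 : q1 = l <;>
        by_cases h4 : q2 = k <;> simp [h1, h2, h3, h4] <;> subst_vars <;> simp_all <;> ring
    rw [Finset.sum_congr rfl (fun q _ => hterm q), ← map_sum] at h2
    have h3 : (∑ q : Fin n × Fin n, ((if q = (k, l) then c (k, l) else 0)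
        - (if q = (l, k) then c (l, k) else 0))) = 0 := by
      have hinj := (ExteriorAlgebra.algebraMap_leftInverse (R := ℝ) M).injective
      apply hinj
      rw [h2, map_zero]
    rw [Finset.sum_sub_distrib, Finset.sum_ite_eq' Finset.univ, Finset.sum_ite_eq' Finset.univ]
      at h3
    simp only [Finset.mem_univ, if_true] at h3
    linarith
  rw [← hc]
  apply Finset.sum_involution (fun q _ => (q.2, q.1))
  · intro q _
    rcases q with ⟨q1, q2⟩
    have := key q1 q2
    dsimp only
    rw [this, ι_anticomm (b q2) (b q1), smul_neg]
    exact add_neg_cancel _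
  · intro q _ hfq
    rcases q with ⟨q1, q2⟩
    intro hq
    apply hfq
    have : q1 = q2 := by
      have := congrArg Prod.fst hq
      exact this.symm
    rw [this, ι_sq_zero, smul_zero]
  · intro q _; exact Finset.mem_univ _
  · intro q _; rfl

section nilp
variable {A : Type*} [Ring A]

lemma sum_sq_zero_pow : ∀ (n : ℕ) (w : Fin n → A), (∀ i j, Commute (w i) (w j)) →
    (∀ i, w i * w i = 0) → (∑ i, w i) ^ (n + 1) = 0 := by
  intro n
  induction n with
  | zero => intro w _ _; simp
  | succ n ih =>
    intro w hcomm hsq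
    have hS : (∑ i : Fin (n+1), w i) = w 0 + ∑ i : Fin n, w i.succ := by
      rw [Fin.sum_univ_succ]
    have hc : Commute (w 0) (∑ i : Fin n, w i.succ) :=
      Commute.sum_right _ _ _ (fun i _ => hcomm 0 i.succ)
    have ihS : (∑ i : Fin n, w i.succ) ^ (n + 1) = 0 :=
      ih (fun i => w i.succ) (fun i j => hcomm i.succ j.succ) (fun i => hsq i.succ)
    rw [hS, hc.add_pow]
    apply Finset.sum_eq_zero
    intro k hk
    rcases k with _ | _ | k
    · -- k = 0 : S^(n+2)
      have : (∑ i : Fin n, w i.succ) ^ (n + 2) = 0 := by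
        rw [show n + 2 = (n+1) + 1 from rfl, pow_succ, ihS, zero_mul]
      simp [this]
    · -- k = 1
      simp [ihS, pow_succ]
    · -- k ≥ 2
      have : w 0 ^ (k + 2) = 0 := by
        rw [show k + 2 = 2 + k from by ring, pow_add, pow_two, hsq 0, zero_mul]
      simp [this]
end nilp

section Op
variable {p : ℕ} (z : Module.Basis (Fin p ⊕ Fin p) ℝ M)

noncomputable def Nop : ExteriorAlgebra ℝ M →ₗ[ℝ] ExteriorAlgebra ℝ M :=
  ∑ s : Fin p ⊕ Fin p, (LinearMap.mulLeft ℝ (ι ℝ (z s))).comp (ct (z.coord s))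

lemma Nop_apply (x : ExteriorAlgebra ℝ M) :
    Nop z x = ∑ s : Fin p ⊕ Fin p, ι ℝ (z s) * ct (z.coord s) x := by
  simp [Nop]

lemma Nop_ι_mul (m : M) (x : ExteriorAlgebra ℝ M) :
    Nop z (ι ℝ m * x) = ι ℝ m * x + ι ℝ m * Nop z x := by
  rw [Nop_apply, Nop_apply]
  have hterm : ∀ s : Fin p ⊕ Fin p, ι ℝ (z s) * ct (z.coord s) (ι ℝ m * x)
      = z.coord s m • (ι ℝ (z s) * x) + ι ℝ m * (ι ℝ (z s) * ct (z.coord s) x) := by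
    intro s
    rw [ct_ι_mul, mul_sub, mul_smul_comm, ← mul_assoc, ι_anticomm (z s) m, neg_mul,
      mul_assoc, sub_neg_eq_add]
  rw [Finset.sum_congr rfl (fun s _ => hterm s), Finset.sum_add_distrib, ← Finset.mul_sum]
  congr 1
  have : ∑ s : Fin p ⊕ Fin p, z.coord s m • (ι ℝ (z s) * x)
      = (∑ s : Fin p ⊕ Fin p, z.coord s m • ι ℝ (z s)) * x := by
    rw [Finset.sum_mul]
    exact Finset.sum_congr rfl fun s _ => (smul_mul_assoc _ _ _).symm
  rw [this]
  congr 1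
  have h2 : (∑ s : Fin p ⊕ Fin p, z.coord s m • ι ℝ (z s))
      = ι ℝ (∑ s : Fin p ⊕ Fin p, z.coord s m • z s) := by
    rw [map_sum]
    simp
  rw [h2]
  congr 1
  simp_rw [Module.Basis.coord_apply]
  exact z.sum_repr m

lemma Nop_eigen : ∀ (n : ℕ) (x : ExteriorAlgebra ℝ M),
    x ∈ LinearMap.range (ι ℝ : M →ₗ[ℝ] ExteriorAlgebra ℝ M) ^ n → Nop z x = (n : ℝ) • x := by
  intro n
  induction n with
  | zero =>
    intro x hx
    rw [pow_zero] at hx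
    obtain ⟨r, hr⟩ := Submodule.mem_one.mp hx
    rw [← hr, Nop_apply]
    simp [ct, CliffordAlgebra.contractLeft_algebraMap]
  | succ n ih =>
    intro x hx
    rw [pow_succ'] at hx
    refine Submodule.mul_induction_on hx (fun a ha b hb => ?_) (fun a b hha hhb => ?_)
    · obtain ⟨m, rfl⟩ := ha
      rw [Nop_ι_mul, ih b hb, mul_smul_comm]
      push_cast
      rw [add_smul, one_smul]
      abel
    · rw [map_add, hha, hhb, smul_add]
end Op

section Symp
variable {p : ℕ} (z : Module.Basis (Fin p ⊕ Fin p) ℝ M)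

noncomputable def ωb : ExteriorAlgebra ℝ M := ∑ i : Fin p, ι ℝ (z (Sum.inl i)) * ι ℝ (z (Sum.inr i))

noncomputable def Lam : ExteriorAlgebra ℝ M →ₗ[ℝ] ExteriorAlgebra ℝ M :=
  ∑ i : Fin p, (ct (z.coord (Sum.inr i))).comp (ct (z.coord (Sum.inl i)))

lemma Lam_apply (x : ExteriorAlgebra ℝ M) :
    Lam z x = ∑ i : Fin p, ct (z.coord (Sum.inr i)) (ct (z.coord (Sum.inl i)) x) := by
  simp [Lam]

lemma coord_eval (s t : Fin p ⊕ Fin p) : z.coord s (z t) = if t = s then 1 else 0 := by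
  rw [Module.Basis.coord_apply, Module.Basis.repr_self, Finsupp.single_apply]

lemma Tterm (i j : Fin p) (x : ExteriorAlgebra ℝ M) :
    ct (z.coord (Sum.inr j)) (ct (z.coord (Sum.inl j))
        (ι ℝ (z (Sum.inl i)) * (ι ℝ (z (Sum.inr i)) * x)))
      = (if i = j then
          (x - ι ℝ (z (Sum.inr j)) * ct (z.coord (Sum.inr j)) x
             - ι ℝ (z (Sum.inl j)) * ct (z.coord (Sum.inl j)) x) else 0)
        + ι ℝ (z (Sum.inl i)) * (ι ℝ (z (Sum.inr i))
            * ct (z.coord (Sum.inr j)) (ct (z.coord (Sum.inl j)) x)) := by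
  have hee : z.coord (Sum.inl j) (z (Sum.inl i)) = if i = j then 1 else 0 := by
    rw [coord_eval]; simp
  have hef : z.coord (Sum.inl j) (z (Sum.inr i)) = 0 := by rw [coord_eval]; simp
  have hfe : z.coord (Sum.inr j) (z (Sum.inl i)) = 0 := by rw [coord_eval]; simp
  have hff : z.coord (Sum.inr j) (z (Sum.inr i)) = if i = j then 1 else 0 := by
    rw [coord_eval]; simp
  by_cases h : i = j
  · subst h
    simp only [if_pos rfl] at hee hff ⊢
    simp only [ct_ι_mul, map_smul, map_sub, map_add, hee, hef, hfe, hff, one_smul, zero_smul,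
      zero_sub, smul_sub, mul_neg, neg_neg, mul_sub, map_neg, sub_zero, zero_add, add_zero]
    simp only [if_true, one_smul, neg_one_smul, neg_smul]
    abel
  · simp only [if_neg h] at hee hff ⊢
    simp only [ct_ι_mul, map_smul, map_sub, map_add, hee, hef, hfe, hff, zero_smul,
      zero_sub, mul_neg, neg_neg, map_neg, sub_zero, zero_add, add_zero]

lemma commLN (x : ExteriorAlgebra ℝ M) :
    Lam z (ωb z * x) = ωb z * Lam z x + (p : ℝ) • x - Nop z x := by
  rw [Lam_apply, ωb]
  have expand : ∀ j : Fin p, ct (z.coord (Sum.inr j)) (ct (z.coord (Sum.inl j))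
      ((∑ i : Fin p, ι ℝ (z (Sum.inl i)) * ι ℝ (z (Sum.inr i))) * x))
      = ∑ i : Fin p, ct (z.coord (Sum.inr j)) (ct (z.coord (Sum.inl j))
          (ι ℝ (z (Sum.inl i)) * (ι ℝ (z (Sum.inr i)) * x))) := by
    intro j
    rw [Finset.sum_mul, map_sum, map_sum]
    exact Finset.sum_congr rfl fun i _ => by rw [mul_assoc]
  rw [Finset.sum_congr rfl (fun j _ => expand j)]
  rw [Finset.sum_congr rfl (fun j _ => Finset.sum_congr rfl (fun i _ => Tterm z i j x))]
  rw [Finset.sum_congr rfl (fun j _ => Finset.sum_add_distrib)]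
  rw [Finset.sum_add_distrib]
  have part1 : (∑ j : Fin p, ∑ i : Fin p, (if i = j then
      (x - ι ℝ (z (Sum.inr j)) * ct (z.coord (Sum.inr j)) x
         - ι ℝ (z (Sum.inl j)) * ct (z.coord (Sum.inl j)) x) else 0))
      = (p : ℝ) • x - Nop z x := by
    have : ∀ j : Fin p, (∑ i : Fin p, (if i = j then
        (x - ι ℝ (z (Sum.inr j)) * ct (z.coord (Sum.inr j)) x
           - ι ℝ (z (Sum.inl j)) * ct (z.coord (Sum.inl j)) x) else 0))
        = x - ι ℝ (z (Sum.inr j)) * ct (z.coord (Sum.inr j)) x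
             - ι ℝ (z (Sum.inl j)) * ct (z.coord (Sum.inl j)) x := by
      intro j
      rw [Finset.sum_ite_eq' Finset.univ j]
      simp
    rw [Finset.sum_congr rfl (fun j _ => this j)]
    rw [Nop_apply, Fintype.sum_sum_type]
    have hc : ((p : ℝ) • x : ExteriorAlgebra ℝ M) = ∑ _j : Fin p, x := by
      rw [Finset.sum_const, Finset.card_univ, Fintype.card_fin, (Nat.cast_smul_eq_nsmul ℝ _ _)]
    rw [hc]
    rw [Finset.sum_sub_distrib, Finset.sum_sub_distrib]
    abel
  have part2 : (∑ j : Fin p, ∑ i : Fin p, ι ℝ (z (Sum.inl i)) * (ι ℝ (z (Sum.inr i))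
      * ct (z.coord (Sum.inr j)) (ct (z.coord (Sum.inl j)) x)))
      = (∑ i : Fin p, ι ℝ (z (Sum.inl i)) * ι ℝ (z (Sum.inr i))) * Lam z x := by
    rw [Lam_apply, Finset.mul_sum]
    refine Finset.sum_congr rfl fun j _ => ?_
    rw [Finset.sum_mul]
    exact Finset.sum_congr rfl fun i _ => by rw [mul_assoc]
  rw [part1, part2]
  abel
end Symp

section Deg
variable {p : ℕ}

abbrev PP (M : Type*) [AddCommGroup M] [Module ℝ M] : Submodule ℝ (ExteriorAlgebra ℝ M) :=
  LinearMap.range (ι ℝ : M →ₗ[ℝ] ExteriorAlgebra ℝ M)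

lemma ct_mem_pow (d : Module.Dual ℝ M) : ∀ (n : ℕ) (x : ExteriorAlgebra ℝ M),
    x ∈ PP M ^ (n+1) → ct d x ∈ PP M ^ n := by
  intro n
  induction n with
  | zero =>
    intro x hx
    rw [pow_one] at hx
    obtain ⟨m, rfl⟩ := hx
    rw [show ct d (ι ℝ m) = algebraMap ℝ _ (d m) from CliffordAlgebra.contractLeft_ι _ d m]
    simpa using Submodule.algebraMap_mem _
  | succ n ih =>
    intro x hx
    rw [pow_succ'] at hx
    refine Submodule.mul_induction_on hx (fun a ha b hb => ?_) (fun a b hha hhb => ?_)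
    · obtain ⟨m, rfl⟩ := ha
      rw [ct_ι_mul]
      refine sub_mem (Submodule.smul_mem _ _ hb) ?_
      rw [pow_succ']
      exact Submodule.mul_mem_mul (LinearMap.mem_range_self _ _) (ih b hb)
    · rw [map_add]; exact add_mem hha hhb

lemma ct_pow_zero (d : Module.Dual ℝ M) (x : ExteriorAlgebra ℝ M) (hx : x ∈ PP M ^ 0) :
    ct d x = 0 := by
  rw [pow_zero] at hx
  obtain ⟨r, hr⟩ := Submodule.mem_one.mp hx
  rw [← hr]
  exact CliffordAlgebra.contractLeft_algebraMap _ d r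

variable (z : Module.Basis (Fin p ⊕ Fin p) ℝ M)

lemma ωb_mem : ωb z ∈ PP M ^ 2 := by
  rw [ωb]
  refine Submodule.sum_mem _ fun i _ => ?_
  rw [pow_two]
  exact Submodule.mul_mem_mul (LinearMap.mem_range_self _ _) (LinearMap.mem_range_self _ _)

lemma mul_ωb_mem {k : ℕ} {x : ExteriorAlgebra ℝ M} (hx : x ∈ PP M ^ k) :
    ωb z * x ∈ PP M ^ (k + 2) := by
  rw [add_comm, pow_add]
  exact Submodule.mul_mem_mul (ωb_mem z) hx

lemma pow_ωb_mul_mem {k : ℕ} (r : ℕ) {x : ExteriorAlgebra ℝ M} (hx : x ∈ PP M ^ k) :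
    ωb z ^ r * x ∈ PP M ^ (k + 2 * r) := by
  induction r with
  | zero => simpa using hx
  | succ r ih =>
    have h1 : ωb z ^ (r + 1) * x = ωb z * (ωb z ^ r * x) := by rw [pow_succ', mul_assoc]
    rw [h1, show k + 2 * (r + 1) = (k + 2 * r) + 2 by ring]
    exact mul_ωb_mem z ih

lemma Lam_mem {k : ℕ} {x : ExteriorAlgebra ℝ M} (hx : x ∈ PP M ^ (k + 2)) :
    Lam z x ∈ PP M ^ k := by
  rw [Lam_apply]
  exact Submodule.sum_mem _ fun i _ =>
    ct_mem_pow _ _ _ (ct_mem_pow _ _ _ hx)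

lemma Lam_low0 {x : ExteriorAlgebra ℝ M} (hx : x ∈ PP M ^ 0) : Lam z x = 0 := by
  rw [Lam_apply]
  refine Finset.sum_eq_zero fun i _ => ?_
  rw [ct_pow_zero _ _ hx, map_zero]

lemma Lam_low1 {x : ExteriorAlgebra ℝ M} (hx : x ∈ PP M ^ 1) : Lam z x = 0 := by
  rw [Lam_apply]
  refine Finset.sum_eq_zero fun i _ => ?_
  exact ct_pow_zero _ _ (ct_mem_pow _ 0 _ hx)

lemma iterated (r : ℕ) : ∀ (k : ℕ) (β : ExteriorAlgebra ℝ M), β ∈ PP M ^ k →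
    Lam z (ωb z ^ (r+1) * β) = ωb z ^ (r+1) * Lam z β
      + (((r : ℝ) + 1) * ((p : ℝ) - k - r)) • (ωb z ^ r * β) := by
  induction r with
  | zero =>
    intro k β hβ
    rw [pow_one, commLN, Nop_eigen z k β hβ, pow_zero, one_mul]
    module
  | succ r ih =>
    intro k β hβ
    have h1 : ωb z ^ (r + 1 + 1) * β = ωb z ^ (r + 1) * (ωb z * β) := by
      rw [pow_succ, mul_assoc]
    rw [h1, ih (k+2) (ωb z * β) (mul_ωb_mem z hβ), commLN, Nop_eigen z k β hβ]
    have h2 : ωb z ^ r * (ωb z * β) = ωb z ^ (r+1) * β := by rw [← mul_assoc, ← pow_succ]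
    have h3 : ωb z ^ (r+1) * (ωb z * Lam z β) = ωb z ^ (r+1+1) * Lam z β := by
      rw [← mul_assoc, ← pow_succ]
    rw [h2, mul_sub, mul_add, h3, mul_smul_comm, mul_smul_comm]
    push_cast
    module
end Deg

section Main
variable {p : ℕ} (z : Module.Basis (Fin p ⊕ Fin p) ℝ M)

lemma main_induction : ∀ (k : ℕ), ∀ (r : ℕ) (β : ExteriorAlgebra ℝ M), β ∈ PP M ^ k →
    k + r ≤ p → ωb z ^ r * β = 0 → β = 0 := by
  intro k
  induction k using Nat.strong_induction_on with
  | _ k H =>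
    intro r
    induction r with
    | zero => intro β _ _ h0; simpa using h0
    | succ r ihr =>
      intro β hβ hle h0
      have hiter := iterated z r k β hβ
      rw [h0, map_zero] at hiter
      -- 0 = ωb^{r+1} Λβ + c • (ωb^r β)
      have hc : ((r : ℝ) + 1) * ((p : ℝ) - k - r) ≠ 0 := by
        have h1 : (k : ℝ) + (r + 1) ≤ (p : ℝ) := by exact_mod_cast Nat.cast_le.mpr hle
        have : (0 : ℝ) < ((r : ℝ) + 1) * ((p : ℝ) - k - r) := by nlinarith
        linarith
      have hLam0 : Lam z β = 0 := by
        rcases k with _ | _ | k'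
        · exact Lam_low0 z hβ
        · exact Lam_low1 z hβ
        · -- k = k' + 2
          have hmem : Lam z β ∈ PP M ^ k' := Lam_mem z hβ
          have hmul : ωb z ^ (r + 2) * Lam z β = 0 := by
            have := congrArg (fun y => ωb z * y) hiter.symm
            simp only [mul_zero, mul_add] at this
            have e1 : ωb z * (ωb z ^ (r+1) * Lam z β) = ωb z ^ (r+2) * Lam z β := by
              rw [← mul_assoc, ← pow_succ']
            have e2 : ωb z * ((((r : ℝ) + 1) * ((p : ℝ) - ↑(k'+2) - r)) • (ωb z ^ r * β))
                = (((r : ℝ) + 1) * ((p : ℝ) - ↑(k'+2) - r)) • (ωb z ^ (r+1) * β) := by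
              rw [mul_smul_comm, ← mul_assoc, ← pow_succ']
            rw [e1, e2, h0, smul_zero, add_zero] at this
            exact this
          exact H k' (by omega) (r + 2) (Lam z β) hmem (by omega) hmul
      rw [hLam0, mul_zero, zero_add] at hiter
      have hωr : ωb z ^ r * β = 0 := by
        have := smul_right_injective (ExteriorAlgebra ℝ M) hc
        apply this
        simpa using hiter.symm
      exact ihr β hβ (by omega) hωr
end Main

section Darboux
variable [FiniteDimensional ℝ M]

noncomputable def Tmap (x : ExteriorAlgebra ℝ M) :
    Module.Dual ℝ M →ₗ[ℝ] ExteriorAlgebra ℝ M :=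
  LinearMap.flip (CliffordAlgebra.contractLeft (Q := (0 : QuadraticForm ℝ M))) x

lemma Tmap_apply (x : ExteriorAlgebra ℝ M) (d : Module.Dual ℝ M) : Tmap x d = ct d x := rfl

lemma ct_ι_mul_ι' (d : Module.Dual ℝ M) (a b : M) :
    ct d (ι ℝ a * ι ℝ b) = d a • ι ℝ b - d b • ι ℝ a := by
  rw [show (ι ℝ a * ι ℝ b : ExteriorAlgebra ℝ M) = ι ℝ a * ι ℝ b from rfl, ct_ι_mul]
  congr 1
  rw [show ct d (ι ℝ b) = algebraMap ℝ _ (d b) from CliffordAlgebra.contractLeft_ι _ d b]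
  rw [← Algebra.commutes, ← Algebra.smul_def]

lemma ct_anticomm (d d' : Module.Dual ℝ M) (x : ExteriorAlgebra ℝ M) :
    ct d (ct d' x) = -ct d' (ct d x) :=
  CliffordAlgebra.contractLeft_comm _ _ _

lemma ct_self (d : Module.Dual ℝ M) (x : ExteriorAlgebra ℝ M) : ct d (ct d x) = 0 :=
  CliffordAlgebra.contractLeft_contractLeft _ _

lemma algMap_inj : Function.Injective (algebraMap ℝ (ExteriorAlgebra ℝ M)) :=
  (ExteriorAlgebra.algebraMap_leftInverse (R := ℝ) M).injective

lemma ct_ι' (d : Module.Dual ℝ M) (m : M) : ct d (ι ℝ m) = algebraMap ℝ _ (d m) :=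
  CliffordAlgebra.contractLeft_ι _ d m

lemma darboux_aux : ∀ (s : ℕ) (ω : ExteriorAlgebra ℝ M), ω ∈ PP M ^ 2 →
    Module.finrank ℝ (LinearMap.range (Tmap ω)) ≤ s →
    ∃ (m : ℕ) (x y : Fin m → M), LinearIndependent ℝ (Sum.elim x y) ∧
      (∀ i, ι ℝ (x i) ∈ LinearMap.range (Tmap ω)) ∧
      (∀ i, ι ℝ (y i) ∈ LinearMap.range (Tmap ω)) ∧
      ω = ∑ i, ι ℝ (x i) * ι ℝ (y i) := by
  intro s
  induction s using Nat.strong_induction_on with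
  | _ s H =>
  intro ω hω2 hrk
  by_cases hω : ω = 0
  · refine ⟨0, Fin.elim0, Fin.elim0, ?_, fun i => i.elim0, fun i => i.elim0, by simp [hω]⟩
    exact linearIndependent_empty_type
  · -- find d with ct d ω ≠ 0
    have hd : ∃ d : Module.Dual ℝ M, ct d ω ≠ 0 := by
      by_contra hall
      push_neg at hall
      exact hω (eq_zero_of_ct_eq_zero hω2 hall)
    obtain ⟨d, hdne⟩ := hd
    have hv1 : ct d ω ∈ PP M ^ 1 := ct_mem_pow d 1 ω hω2
    rw [pow_one] at hv1
    obtain ⟨v, hv⟩ := hv1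
    have hvne : v ≠ 0 := by
      intro h0
      apply hdne
      rw [← hv, h0, map_zero]
    -- dual functional with d' v = 1
    have hd'0 : ∃ d0 : Module.Dual ℝ M, d0 v ≠ 0 := by
      by_contra hall
      push_neg at hall
      exact hvne ((Module.forall_dual_apply_eq_zero_iff ℝ v).mp hall)
    obtain ⟨d0, hd0⟩ := hd'0
    set d' : Module.Dual ℝ M := (d0 v)⁻¹ • d0 with hd'def
    have hd'v : d' v = 1 := by
      rw [hd'def]
      simp [inv_mul_cancel₀ hd0]
    have ha1 : ct d' ω ∈ PP M ^ 1 := ct_mem_pow d' 1 ω hω2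
    rw [pow_one] at ha1
    obtain ⟨a, ha⟩ := ha1
    -- scalar identities
    have hdv : d v = 0 := by
      apply algMap_inj (M := M)
      rw [map_zero, ← ct_ι', hv, ct_self]
    have hd'a : d' a = 0 := by
      apply algMap_inj (M := M)
      rw [map_zero, ← ct_ι', ha, ct_self]
    have hda : d a = -1 := by
      apply algMap_inj (M := M)
      have h1 : ct d (ct d' ω) = -ct d' (ct d ω) := ct_anticomm d d' ω
      rw [← ha, ← hv, ct_ι', ct_ι', hd'v] at h1
      rw [h1]
      simp
    set ω' : ExteriorAlgebra ℝ M := ω - ι ℝ v * ι ℝ a with hω'def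
    have hω'2 : ω' ∈ PP M ^ 2 := by
      refine sub_mem hω2 ?_
      rw [pow_two]
      exact Submodule.mul_mem_mul (LinearMap.mem_range_self _ _) (LinearMap.mem_range_self _ _)
    have hctd : ct d ω' = 0 := by
      rw [hω'def, map_sub, ct_ι_mul_ι', hdv, hda, ← hv]
      simp
    have hctd' : ct d' ω' = 0 := by
      rw [hω'def, map_sub, ct_ι_mul_ι', hd'v, hd'a, ← ha]
      simp
    have hle : LinearMap.range (Tmap ω') ≤ LinearMap.range (Tmap ω) := by
      rintro u ⟨c, rfl⟩
      rw [Tmap_apply, hω'def, map_sub, ct_ι_mul_ι']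
      refine sub_mem ⟨c, rfl⟩ (sub_mem ?_ ?_)
      · exact Submodule.smul_mem _ _ ⟨d', ha.symm⟩
      · exact Submodule.smul_mem _ _ ⟨d, hv.symm⟩
    have hker' : ∀ u : ExteriorAlgebra ℝ M, u ∈ LinearMap.range (Tmap ω') →
        ct d u = 0 ∧ ct d' u = 0 := by
      rintro u ⟨c, rfl⟩
      constructor
      · rw [Tmap_apply, ct_anticomm, hctd, map_zero, neg_zero]
      · rw [Tmap_apply, ct_anticomm, hctd', map_zero, neg_zero]
    have hιv : (ι ℝ v : ExteriorAlgebra ℝ M) ∈ LinearMap.range (Tmap ω) := ⟨d, hv.symm⟩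
    have hιvnot : (ι ℝ v : ExteriorAlgebra ℝ M) ∉ LinearMap.range (Tmap ω') := by
      intro hmem
      have h2 := (hker' _ hmem).2
      rw [ct_ι', hd'v] at h2
      have h3 : (1 : ℝ) = 0 := algMap_inj (M := M) (by rw [map_zero]; exact h2)
      exact one_ne_zero h3
    have hlt : LinearMap.range (Tmap ω') < LinearMap.range (Tmap ω) :=
      lt_of_le_of_ne hle (fun h => hιvnot (h ▸ hιv))
    have hrk' : Module.finrank ℝ (LinearMap.range (Tmap ω')) < s :=
      lt_of_lt_of_le (Submodule.finrank_lt_finrank_of_lt hlt) hrk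
    obtain ⟨m, x, y, hind, hxr, hyr, hsum⟩ := H _ hrk' ω' hω'2 le_rfl
    -- kernel facts for x i, y i
    have hxd : ∀ i, d (x i) = 0 ∧ d' (x i) = 0 := by
      intro i
      have h1 := hker' _ (hxr i)
      rw [ct_ι', ct_ι'] at h1
      exact ⟨algMap_inj (by rw [h1.1, map_zero]), algMap_inj (by rw [h1.2, map_zero])⟩
    have hyd : ∀ i, d (y i) = 0 ∧ d' (y i) = 0 := by
      intro i
      have h1 := hker' _ (hyr i)
      rw [ct_ι', ct_ι'] at h1
      exact ⟨algMap_inj (by rw [h1.1, map_zero]), algMap_inj (by rw [h1.2, map_zero])⟩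
    refine ⟨m + 1, Fin.cons v x, Fin.cons a y, ?_, ?_, ?_, ?_⟩
    · -- linear independence
      rw [Fintype.linearIndependent_iff]
      intro g hg
      rw [Fintype.sum_sum_type] at hg
      simp only [Sum.elim_inl, Sum.elim_inr] at hg
      rw [Fin.sum_univ_succ, Fin.sum_univ_succ] at hg
      simp only [Fin.cons_zero, Fin.cons_succ] at hg
      -- apply d and d'
      have happd := congrArg d hg
      have happd' := congrArg d' hg
      simp only [map_add, map_sum, map_smul, smul_eq_mul, hdv, hda, hd'v, hd'a]
        at happd happd'
      have hbx : (∑ i : Fin m, g (Sum.inl i.succ) * d (x i)) = 0 :=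
        Finset.sum_eq_zero fun i _ => by rw [(hxd i).1, mul_zero]
      have hby : (∑ i : Fin m, g (Sum.inr i.succ) * d (y i)) = 0 :=
        Finset.sum_eq_zero fun i _ => by rw [(hyd i).1, mul_zero]
      have hbx' : (∑ i : Fin m, g (Sum.inl i.succ) * d' (x i)) = 0 :=
        Finset.sum_eq_zero fun i _ => by rw [(hxd i).2, mul_zero]
      have hby' : (∑ i : Fin m, g (Sum.inr i.succ) * d' (y i)) = 0 :=
        Finset.sum_eq_zero fun i _ => by rw [(hyd i).2, mul_zero]
      rw [hbx, hby] at happd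
      rw [hbx', hby'] at happd'
      have h1 : g (Sum.inr 0) = 0 := by
        simp at happd
        linarith
      have h2 : g (Sum.inl 0) = 0 := by
        simp at happd'
        linarith
      rw [h1, h2] at hg
      simp only [zero_smul, zero_add, add_zero] at hg
      have hgrest := (Fintype.linearIndependent_iff.mp hind)
        (fun s => Sum.elim (fun i => g (Sum.inl i.succ)) (fun i => g (Sum.inr i.succ)) s) ?_
      · intro sidx
        rcases sidx with i | i
        · refine Fin.cases h2 (fun j => ?_) i
          exact hgrest (Sum.inl j)
        · refine Fin.cases h1 (fun j => ?_) i
          exact hgrest (Sum.inr j)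
      · rw [Fintype.sum_sum_type]
        simp only [Sum.elim_inl, Sum.elim_inr]
        exact hg
    · intro i
      refine Fin.cases ?_ (fun j => ?_) i
      · exact hιv
      · simp only [Fin.cons_succ]
        exact hle (hxr j)
    · intro i
      refine Fin.cases ?_ (fun j => ?_) i
      · exact ⟨d', ha.symm⟩
      · simp only [Fin.cons_succ]
        exact hle (hyr j)
    · rw [Fin.sum_univ_succ]
      simp only [Fin.cons_zero, Fin.cons_succ]
      rw [← hsum, hω'def]
      abel
end Darboux

section Assemble
variable [FiniteDimensional ℝ M]

lemma mul_ι_swap (u w : M) (t : ExteriorAlgebra ℝ M) :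
    ι ℝ u * (ι ℝ w * t) = -(ι ℝ w * (ι ℝ u * t)) := by
  rw [← mul_assoc, ι_anticomm, neg_mul, mul_assoc]

lemma pair_commute (a b c d : M) :
    Commute (ι ℝ a * ι ℝ b) ((ι ℝ c * ι ℝ d : ExteriorAlgebra ℝ M)) := by
  unfold Commute SemiconjBy
  calc (ι ℝ a * ι ℝ b) * (ι ℝ c * ι ℝ d)
      = ι ℝ a * (ι ℝ b * (ι ℝ c * ι ℝ d)) := by rw [mul_assoc]
    _ = ι ℝ a * (-(ι ℝ c * (ι ℝ b * ι ℝ d))) := by rw [mul_ι_swap b c]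
    _ = -(ι ℝ a * (ι ℝ c * (ι ℝ b * ι ℝ d))) := by rw [mul_neg]
    _ = -(-(ι ℝ c * (ι ℝ a * (ι ℝ b * ι ℝ d)))) := by rw [mul_ι_swap a c]
    _ = ι ℝ c * (ι ℝ a * (ι ℝ b * ι ℝ d)) := by rw [neg_neg]
    _ = ι ℝ c * (ι ℝ a * (-(ι ℝ d * (ι ℝ b * 1)))) := by rw [← mul_ι_swap b d, mul_one]
    _ = -(ι ℝ c * (ι ℝ a * (ι ℝ d * (ι ℝ b * 1)))) := by rw [mul_neg, mul_neg]
    _ = -(ι ℝ c * (-(ι ℝ d * (ι ℝ a * (ι ℝ b * 1))))) := by rw [mul_ι_swap a d]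
    _ = ι ℝ c * (ι ℝ d * (ι ℝ a * (ι ℝ b * 1))) := by rw [mul_neg, neg_neg]
    _ = (ι ℝ c * ι ℝ d) * (ι ℝ a * ι ℝ b) := by rw [mul_one, mul_assoc]

lemma pair_sq_zero (a b : M) :
    (ι ℝ a * ι ℝ b : ExteriorAlgebra ℝ M) * (ι ℝ a * ι ℝ b) = 0 := by
  calc (ι ℝ a * ι ℝ b) * (ι ℝ a * ι ℝ b)
      = ι ℝ a * (ι ℝ b * (ι ℝ a * ι ℝ b)) := by rw [mul_assoc]
    _ = ι ℝ a * (-(ι ℝ a * (ι ℝ b * ι ℝ b))) := by rw [mul_ι_swap b a]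
    _ = 0 := by rw [ι_sq_zero, mul_zero, neg_zero, mul_zero]

lemma darboux {p : ℕ} (hp : 0 < p) (hdim : Module.finrank ℝ M = 2 * p)
    {ω : ExteriorAlgebra ℝ M} (hω2 : ω ∈ PP M ^ 2) (hω : ω ^ p ≠ 0) :
    ∃ z : Module.Basis (Fin p ⊕ Fin p) ℝ M, ω = ωb z := by
  obtain ⟨m, x, y, hind, hxr, hyr, hsum⟩ :=
    darboux_aux (Module.finrank ℝ (LinearMap.range (Tmap ω))) ω hω2 le_rfl
  -- m ≤ p
  have hle : m ≤ p := by
    have hcard := hind.fintype_card_le_finrank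
    rw [hdim] at hcard
    simp only [Fintype.card_sum, Fintype.card_fin] at hcard
    omega
  -- m ≥ p
  have hge : p ≤ m := by
    by_contra hlt
    push_neg at hlt
    apply hω
    have hnil : ω ^ (m + 1) = 0 := by
      rw [hsum]
      exact sum_sq_zero_pow m (fun i => ι ℝ (x i) * ι ℝ (y i))
        (fun i j => pair_commute _ _ _ _) (fun i => pair_sq_zero _ _)
    have : p = (m + 1) + (p - m - 1) := by omega
    rw [this, pow_add, hnil, zero_mul]
  have hm : m = p := le_antisymm hle hge
  subst hm
  haveI : Nonempty (Fin m ⊕ Fin m) := ⟨Sum.inl ⟨0, hp⟩⟩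
  have hcardeq : Fintype.card (Fin m ⊕ Fin m) = Module.finrank ℝ M := by
    simp [hdim]
    omega
  refine ⟨basisOfLinearIndependentOfCardEqFinrank hind hcardeq, ?_⟩
  have hz := coe_basisOfLinearIndependentOfCardEqFinrank hind hcardeq
  rw [ωb]
  rw [hsum]
  refine Finset.sum_congr rfl fun i _ => ?_
  rw [show (basisOfLinearIndependentOfCardEqFinrank hind hcardeq) (Sum.inl i)
        = Sum.elim x y (Sum.inl i) from congrFun hz (Sum.inl i),
      show (basisOfLinearIndependentOfCardEqFinrank hind hcardeq) (Sum.inr i)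
        = Sum.elim x y (Sum.inr i) from congrFun hz (Sum.inr i)]
  rfl
end Assemble
end Statement5Aux

theorem statement5 (V : Type*) [AddCommGroup V] [Module ℝ V] [FiniteDimensional ℝ V]
    (p : ℕ) (hdim : Module.finrank ℝ V = 2 * p)
    (ω : ⋀[ℝ]^2 (Module.Dual ℝ V))
    (hω : (ω : ExteriorAlgebra ℝ (Module.Dual ℝ V)) ^ p ≠ 0) :
    ∀ k : ℕ, k < p →
      Function.Injective (fun β : ⋀[ℝ]^k (Module.Dual ℝ V) =>
        (ω : ExteriorAlgebra ℝ (Module.Dual ℝ V)) * (β : ExteriorAlgebra ℝ (Module.Dual ℝ V))) := by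
  classical
  intro k hk
  set M := Module.Dual ℝ V
  have hp : 0 < p := by omega
  have hdimM : Module.finrank ℝ M = 2 * p := by
    rw [Subspace.dual_finrank_eq, hdim]
  have hω2 : (ω : ExteriorAlgebra ℝ M) ∈ Statement5Aux.PP M ^ 2 := ω.2
  obtain ⟨z, hz⟩ := Statement5Aux.darboux hp hdimM hω2 hω
  intro β₁ β₂ heq
  simp only at heq
  have hdiff : (ω : ExteriorAlgebra ℝ M) * ((β₁ : ExteriorAlgebra ℝ M) - β₂) = 0 := by
    rw [mul_sub, heq, sub_self]
  have hmem : ((β₁ : ExteriorAlgebra ℝ M) - β₂) ∈ Statement5Aux.PP M ^ k :=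
    sub_mem β₁.2 β₂.2
  have h0 : Statement5Aux.ωb z ^ 1 * ((β₁ : ExteriorAlgebra ℝ M) - β₂) = 0 := by
    rw [pow_one, ← hz]
    exact hdiff
  have := Statement5Aux.main_induction z k 1 _ hmem (by omega) h0
  exact Subtype.coe_injective (sub_eq_zero.mp this)
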